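/- Let κ, m ∈ ℝ and let f : ℝ → ℝ with m ≠ −1. Suppose u : ℝ → ℝ → ℝ is C² on ℝ × (0,∞), u_r(t,r) ≠ 0 for all t ∈ ℝ and r > 0, and u satisfies u_t(t,r) = κ·(u_rr(t,r) − (m/r)·u_r(t,r))/u_r(t,r)² + f(u(t,r)) for all t ∈ ℝ and r > 0. Suppose w : ℝ → ℝ → ℝ is C² on ℝ² and satisfies the hodograph relation w(t, u(t,r)) = r^(m+1)/(m+1) for all t ∈ ℝ and r > 0. Then for all t ∈ ℝ and r > 0, setting z = u(t,r), one has w_t(t,z) = κ·w_zz(t,z) − f(z)·w_z(t,z); that is, w satisfies a linear diffusion equation at every point in the image of the map (t,r) ↦ (t, u(t,r)). -/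

import Mathlib

noncomputable section

/-- Partial derivative in the first (time) variable. -/
def partial_t (u : ℝ → ℝ → ℝ) (t r : ℝ) : ℝ := deriv (fun s => u s r) t

/-- Partial derivative in the second (space) variable. -/
def partial_r (u : ℝ → ℝ → ℝ) (t r : ℝ) : ℝ := deriv (fun s => u t s) r

/-- Second partial derivative in the second (space) variable. -/
def partial_rr (u : ℝ → ℝ → ℝ) (t r : ℝ) : ℝ := deriv (deriv (fun s => u t s)) r

/-- Mixed partial derivative: first in space, then in time. -/
def partial_tr (u : ℝ → ℝ → ℝ) (t r : ℝ) : ℝ := deriv (fun s => deriv (fun y => u s y) r) t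

/-- `u` is C² on ℝ × (0,∞): `u`, `u_t`, `u_r`, `u_rr` and the mixed partial `u_tr`
exist and are continuous there. -/
def IsC2On (u : ℝ → ℝ → ℝ) : Prop :=
  (∀ t r : ℝ, 0 < r → DifferentiableAt ℝ (fun s => u s r) t) ∧
  (∀ t r : ℝ, 0 < r → DifferentiableAt ℝ (fun s => u t s) r) ∧
  (∀ t r : ℝ, 0 < r → DifferentiableAt ℝ (deriv (fun s => u t s)) r) ∧
  (∀ t r : ℝ, 0 < r → DifferentiableAt ℝ (fun s => deriv (fun y => u s y) r) t) ∧
  ContinuousOn (fun q : ℝ × ℝ => u q.1 q.2) {q : ℝ × ℝ | 0 < q.2} ∧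
  ContinuousOn (fun q : ℝ × ℝ => partial_t u q.1 q.2) {q : ℝ × ℝ | 0 < q.2} ∧
  ContinuousOn (fun q : ℝ × ℝ => partial_r u q.1 q.2) {q : ℝ × ℝ | 0 < q.2} ∧
  ContinuousOn (fun q : ℝ × ℝ => partial_rr u q.1 q.2) {q : ℝ × ℝ | 0 < q.2} ∧
  ContinuousOn (fun q : ℝ × ℝ => partial_tr u q.1 q.2) {q : ℝ × ℝ | 0 < q.2}

/-- Hodograph transformation: the equation with diffusivity `h(v) = -κ/v` and
source `f` is mapped to a linear diffusion equation. -/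
theorem hodograph_general_f (κ m : ℝ) (f : ℝ → ℝ) (hm : m ≠ -1)
    (u : ℝ → ℝ → ℝ) (hu : IsC2On u)
    (hur : ∀ t r : ℝ, 0 < r → partial_r u t r ≠ 0)
    (hpde : ∀ t r : ℝ, 0 < r →
      partial_t u t r
        = κ * (partial_rr u t r - (m / r) * partial_r u t r) / (partial_r u t r) ^ 2
          + f (u t r))
    (w : ℝ → ℝ → ℝ) (hw : ContDiff ℝ 2 (Function.uncurry w))
    (hhod : ∀ t r : ℝ, 0 < r → w t (u t r) = r ^ (m + 1) / (m + 1)) :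
    ∀ t r : ℝ, 0 < r →
      partial_t w t (u t r)
        = κ * partial_rr w t (u t r) - f (u t r) * partial_r w t (u t r) := by
  intro t r hr
  obtain ⟨hu_t, hu_r, hu_rr, -, -⟩ := hu
  have hFd : Differentiable ℝ (Function.uncurry w) := hw.differentiable (by norm_num)
  set F := Function.uncurry w with hFdef
  have hF1 : ContDiff ℝ 1 (fun p => fderiv ℝ F p) := hw.fderiv_right (by norm_num)
  set Wz : ℝ × ℝ → ℝ := fun p => fderiv ℝ F p (0, 1) with hWzdef
  have hWz : ContDiff ℝ 1 Wz := hF1.clm_apply contDiff_const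
  have hWzd : Differentiable ℝ Wz := hWz.differentiable (by norm_num)
  have pr : ∀ a z : ℝ, partial_r w a z = Wz (a, z) := by
    intro a z
    have hin : HasDerivAt (fun s : ℝ => ((a, s) : ℝ × ℝ)) (0, 1) z :=
      HasDerivAt.prodMk (hasDerivAt_const z a) (hasDerivAt_id z)
    exact ((hFd (a, z)).hasFDerivAt.comp_hasDerivAt z hin).deriv
  have pt : ∀ a z : ℝ, partial_t w a z = fderiv ℝ F (a, z) (1, 0) := by
    intro a z
    have hin : HasDerivAt (fun s : ℝ => ((s, z) : ℝ × ℝ)) (1, 0) a :=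
      HasDerivAt.prodMk (hasDerivAt_id a) (hasDerivAt_const a z)
    exact ((hFd (a, z)).hasFDerivAt.comp_hasDerivAt a hin).deriv
  have prr : ∀ a z : ℝ, partial_rr w a z = fderiv ℝ Wz (a, z) (0, 1) := by
    intro a z
    have hd : deriv (fun s => w a s) = fun s => Wz (a, s) := funext fun s => pr a s
    have hin : HasDerivAt (fun s : ℝ => ((a, s) : ℝ × ℝ)) (0, 1) z :=
      HasDerivAt.prodMk (hasDerivAt_const z a) (hasDerivAt_id z)
    have h2 := ((hWzd (a, z)).hasFDerivAt.comp_hasDerivAt z hin).deriv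
    rw [partial_rr, hd]
    exact h2
  have hm1 : m + 1 ≠ 0 := by intro h; apply hm; linarith
  have hcurve : ∀ s : ℝ, 0 < s →
      HasDerivAt (fun y => ((t, u t y) : ℝ × ℝ)) (0, partial_r u t s) s := by
    intro s hs
    exact HasDerivAt.prodMk (hasDerivAt_const s t) ((hu_r t s hs).hasDerivAt)
  have key1 : ∀ s : ℝ, 0 < s → Wz (t, u t s) * partial_r u t s = s ^ m := by
    intro s hs
    have hc : HasDerivAt (fun y => F (t, u t y))
        (fderiv ℝ F (t, u t s) (0, partial_r u t s)) s :=
      (hFd _).hasFDerivAt.comp_hasDerivAt s (hcurve s hs)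
    have heq : (fun y => F (t, u t y)) =ᶠ[nhds s] (fun y : ℝ => y ^ (m + 1) / (m + 1)) := by
      filter_upwards [isOpen_Ioi.mem_nhds hs] with y hy
      exact hhod t y hy
    have hpow : HasDerivAt (fun y : ℝ => y ^ (m + 1) / (m + 1)) (s ^ m) s := by
      have h := (Real.hasDerivAt_rpow_const (p := m + 1) (Or.inl hs.ne')).div_const (m + 1)
      refine h.congr_deriv ?_
      rw [show m + 1 - 1 = m by ring]
      field_simp
    have hval : fderiv ℝ F (t, u t s) (0, partial_r u t s) = s ^ m :=
      (hc.congr_of_eventuallyEq heq.symm).unique hpow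
    have hsmul : ((0, partial_r u t s) : ℝ × ℝ) = partial_r u t s • ((0, 1) : ℝ × ℝ) := by
      simp
    rw [hsmul, map_smul] at hval
    rw [hWzdef]
    simpa [smul_eq_mul, mul_comm] using hval
  -- time direction
  have hcurve_t : HasDerivAt (fun s => ((s, u s r) : ℝ × ℝ)) (1, partial_t u t r) t :=
    HasDerivAt.prodMk (hasDerivAt_id t) ((hu_t t r hr).hasDerivAt)
  have hct : HasDerivAt (fun s => F (s, u s r))
      (fderiv ℝ F (t, u t r) (1, partial_t u t r)) t :=
    (hFd _).hasFDerivAt.comp_hasDerivAt t hcurve_t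
  have hconst : (fun s => F (s, u s r)) = fun _ => r ^ (m + 1) / (m + 1) :=
    funext fun s => hhod s r hr
  have E2 : fderiv ℝ F (t, u t r) (1, partial_t u t r) = 0 := by
    rw [hconst] at hct
    exact hct.unique (hasDerivAt_const t _)
  have hdecomp : ((1, partial_t u t r) : ℝ × ℝ) = (1, 0) + partial_t u t r • (0, 1) := by
    simp
  rw [hdecomp, map_add, map_smul, smul_eq_mul] at E2
  -- second derivative in space
  have hWc : HasDerivAt (fun s => Wz (t, u t s))
      (fderiv ℝ Wz (t, u t r) (0, partial_r u t r)) r :=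
    (hWzd _).hasFDerivAt.comp_hasDerivAt r (hcurve r hr)
  have hUc : HasDerivAt (fun s => partial_r u t s) (partial_rr u t r) r :=
    (hu_rr t r hr).hasDerivAt
  have hprod := hWc.mul hUc
  have heq2 : (fun s => Wz (t, u t s) * partial_r u t s) =ᶠ[nhds r] fun s : ℝ => s ^ m := by
    filter_upwards [isOpen_Ioi.mem_nhds hr] with s hs
    exact key1 s hs
  have hpow2 : HasDerivAt (fun s : ℝ => s ^ m) (m * r ^ (m - 1)) r :=
    Real.hasDerivAt_rpow_const (Or.inl hr.ne')
  have E3 : fderiv ℝ Wz (t, u t r) (0, partial_r u t r) * partial_r u t r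
      + Wz (t, u t r) * partial_rr u t r = m * r ^ (m - 1) :=
    (hprod.congr_of_eventuallyEq heq2.symm).unique hpow2
  have hsm : fderiv ℝ Wz (t, u t r) (0, partial_r u t r)
      = partial_r u t r * fderiv ℝ Wz (t, u t r) (0, 1) := by
    rw [show ((0, partial_r u t r) : ℝ × ℝ) = partial_r u t r • ((0, 1) : ℝ × ℝ) by simp,
      map_smul, smul_eq_mul]
  rw [hsm] at E3
  have E1 : Wz (t, u t r) * partial_r u t r = r ^ m := key1 r hr
  have hQR : r ^ (m - 1) * r = r ^ m := by
    rw [← Real.rpow_add_one hr.ne' (m - 1)]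
    norm_num
  have hpde' := hpde t r hr
  rw [pt t (u t r), pr t (u t r), prr t (u t r)]
  have hr0 : r ≠ 0 := hr.ne'
  have hur0 : partial_r u t r ≠ 0 := hur t r hr
  have hWzeq : (fderiv ℝ F (t, u t r)) (0, 1) = Wz (t, u t r) := rfl
  rw [hWzeq] at E2
  have E2' : fderiv ℝ F (t, u t r) (1, 0)
      = -(partial_t u t r * Wz (t, u t r)) := by linarith [E2]
  rw [E2', hpde']
  field_simp
  linear_combination (-(κ * r)) * E3 + (κ * m) * E1 + (-(κ * m)) * hQR
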